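/- There is an absolute constant C > 0 such that for every integer k ≥ 1 and every finite simple bipartite graph G whose two parts have sizes x and y and which contains no cycle with at most 2k edges, the number of edges of G is at most C·(x^{1/k}·y + x·y^{1/k}). -/

import Mathlib

open SimpleGraph Finset

set_option linter.unusedSectionVars false
set_option linter.deprecated false

namespace MooreAux

section Lemmas

variable {V : Type} [DecidableEq V] {G : SimpleGraph V}

lemma length_one_struct : ∀ {u v : V} (p : G.Walk u v), p.length = 1 →
    ∃ (h : G.Adj u v), p = Walk.cons h Walk.nil := by
  intro u v p hp
  cases p with
  | nil => simp at hp
  | @cons _ w _ h p' =>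
    simp only [Walk.length_cons, Nat.add_eq_right] at hp
    have hwv : w = v := Walk.eq_of_length_eq_zero hp
    subst hwv
    rw [Walk.length_eq_zero_iff, Walk.nil_iff_eq_nil] at hp
    exact ⟨h, by rw [hp]⟩

lemma path_edge_from_start : ∀ {u v b : V} (q : G.Walk u v), q.IsPath → s(u, b) ∈ q.edges →
    ∃ (h : G.Adj u b) (q' : G.Walk b v), q = Walk.cons h q' := by
  intro u v b q hq he
  cases q with
  | nil => simp at he
  | @cons _ c _ h q' =>
    rw [Walk.edges_cons, List.mem_cons] at he
    rcases he with he | he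
    · rw [Sym2.eq_iff] at he
      rcases he with ⟨-, rfl⟩ | ⟨rfl, rfl⟩
      · exact ⟨h, q', rfl⟩
      · exact ⟨h, q', rfl⟩
    · exfalso
      have hu : u ∈ q'.support := Walk.fst_mem_support_of_mem_edges q' he
      have := hq.support_nodup
      rw [Walk.support_cons] at this
      exact (List.nodup_cons.mp this).1 hu

/-- Two distinct paths with the same endpoints give a cycle of length at most the sum
of the lengths. -/
lemma exists_cycle_of_two_paths : ∀ (n : ℕ) {u v : V} (p q : G.Walk u v),
    p.IsPath → q.IsPath → p ≠ q → p.length + q.length ≤ n →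
    ∃ (a : V) (W : G.Walk a a), W.IsCycle ∧ W.length ≤ p.length + q.length := by
  intro n
  induction n using Nat.strong_induction_on with
  | _ n IH =>
    intro u v p q hp hq hne hlen
    rcases eq_or_ne u v with rfl | huv
    · rw [Walk.isPath_iff_eq_nil] at hp hq
      exact absurd (hp.trans hq.symm) hne
    by_cases hcom : ∃ w, w ∈ p.support ∧ w ∈ q.support ∧ w ≠ u ∧ w ≠ v
    · obtain ⟨w, hwp, hwq, hwu, hwv⟩ := hcom
      set p1 := p.takeUntil w hwp with hp1
      set p2 := p.dropUntil w hwp with hp2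
      set q1 := q.takeUntil w hwq with hq1
      set q2 := q.dropUntil w hwq with hq2
      have hpspec : p1.append p2 = p := p.take_spec hwp
      have hqspec : q1.append q2 = q := q.take_spec hwq
      have hplen : p1.length + p2.length = p.length := by
        rw [← hpspec]; exact (Walk.length_append _ _).symm
      have hqlen : q1.length + q2.length = q.length := by
        rw [← hqspec]; exact (Walk.length_append _ _).symm
      have hp1pos : 1 ≤ p1.length := by
        rcases Nat.eq_zero_or_pos p1.length with h0 | h; · exact absurd (Walk.eq_of_length_eq_zero h0) hwu.symm
        · exact h
      have hq1pos : 1 ≤ q1.length := by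
        rcases Nat.eq_zero_or_pos q1.length with h0 | h; · exact absurd (Walk.eq_of_length_eq_zero h0) hwu.symm
        · exact h
      have hp2pos : 1 ≤ p2.length := by
        rcases Nat.eq_zero_or_pos p2.length with h0 | h; · exact absurd (Walk.eq_of_length_eq_zero h0) hwv
        · exact h
      have hq2pos : 1 ≤ q2.length := by
        rcases Nat.eq_zero_or_pos q2.length with h0 | h; · exact absurd (Walk.eq_of_length_eq_zero h0) hwv
        · exact h
      by_cases h1 : p1 = q1
      · have h2 : p2 ≠ q2 := by
          intro h2; apply hne
          rw [← hpspec, ← hqspec, h1, h2]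
        obtain ⟨a, W, hW, hWl⟩ := IH (p2.length + q2.length) (by omega) p2 q2
          (hp.dropUntil hwp) (hq.dropUntil hwq) h2 le_rfl
        exact ⟨a, W, hW, by omega⟩
      · obtain ⟨a, W, hW, hWl⟩ := IH (p1.length + q1.length) (by omega) p1 q1
          (hp.takeUntil hwp) (hq.takeUntil hwq) h1 le_rfl
        exact ⟨a, W, hW, by omega⟩
    · push_neg at hcom
      -- no common internal vertex
      have hsub : ∀ z, z ∈ p.support → z ∈ q.support → z = u ∨ z = v := by
        intro z hzp hzq
        rcases eq_or_ne z u with rfl | hzu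
        · exact Or.inl rfl
        · exact Or.inr (hcom z hzp hzq hzu)
      by_cases hone : p.length = 1 ∧ q.length = 1
      · obtain ⟨h, hp'⟩ := length_one_struct p hone.1
        obtain ⟨h', hq'⟩ := length_one_struct q hone.2
        exact absurd (hp'.trans hq'.symm) hne
      -- destructure p
      cases p with
      | nil => exact absurd rfl huv
      | @cons _ a _ h p' =>
        have hup' : u ∉ p'.support := by
          have := hp.support_nodup
          rw [Walk.support_cons] at this
          exact (List.nodup_cons.mp this).1
        have hp'path : p'.IsPath := hp.of_cons
        have hav : a ≠ v ∨ (p'.length = 0) := by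
          rcases eq_or_ne a v with rfl | hav
          · right
            have : p'.IsPath := hp'path
            rw [Walk.isPath_iff_eq_nil] at this
            rw [this]; rfl
          · left; exact hav
        -- key : s(u,a) ∉ q.edges, unless degenerate
        have hedge : s(u, a) ∉ (p'.append q.reverse).edges := by
          rw [Walk.edges_append]
          intro hmem
          rcases List.mem_append.mp hmem with hmem | hmem
          · exact hup' (Walk.fst_mem_support_of_mem_edges p' hmem)
          · rw [Walk.edges_reverse, List.mem_reverse] at hmem
            have haq : a ∈ q.support := Walk.snd_mem_support_of_mem_edges q hmem
            have hap : a ∈ (Walk.cons h p').support := by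
              rw [Walk.support_cons]
              exact List.mem_cons_of_mem _ p'.start_mem_support
            rcases hsub a hap haq with rfl | rfl
            · exact h.ne rfl
            · -- a = v : then p' is nil, p has length 1, and q has length 1 too
              have hp'nil : p'.length = 0 := by
                have := hp'path
                rw [Walk.isPath_iff_eq_nil] at this
                rw [this]; rfl
              obtain ⟨hadj, q', hq'⟩ := path_edge_from_start q hq hmem
              have hq'nil : q'.length = 0 := by
                subst hq'
                have : q'.IsPath := hq.of_cons
                rw [Walk.isPath_iff_eq_nil] at this
                rw [this]; rfl
              apply hone
              constructor
              · show (Walk.cons h p').length = 1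
                rw [Walk.length_cons, hp'nil]
              · rw [hq', Walk.length_cons, hq'nil]
        -- the appended walk is a path
        have happ : (p'.append q.reverse).IsPath := by
          rw [Walk.isPath_def, Walk.support_append]
          apply List.Nodup.append
          · exact hp'path.support_nodup
          · have : q.reverse.IsPath := hq.reverse
            have h2 := this.support_nodup
            rw [q.reverse.support_eq_cons] at h2
            exact (List.nodup_cons.mp h2).2
          · intro z hzp' hzq'
            have hzp : z ∈ (Walk.cons h p').support := by
              rw [Walk.support_cons]; exact List.mem_cons_of_mem _ hzp'
            have hzq : z ∈ q.support := by
              have : z ∈ q.reverse.support := List.mem_of_mem_tail hzq'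
              rwa [Walk.support_reverse, List.mem_reverse] at this
            rcases hsub z hzp hzq with rfl | rfl
            · exact hup' hzp'
            · have : q.reverse.IsPath := hq.reverse
              have h2 := this.support_nodup
              rw [q.reverse.support_eq_cons] at h2
              exact (List.nodup_cons.mp h2).1 hzq'
        refine ⟨u, Walk.cons h (p'.append q.reverse), ?_, ?_⟩
        · exact (Walk.cons_isCycle_iff _ h).mpr ⟨happ, hedge⟩
        · rw [Walk.length_cons, Walk.length_append, Walk.length_reverse, Walk.length_cons]
          omega


lemma walk_parity {L : Set V} (hL : ∀ u v : V, G.Adj u v → (u ∈ L ↔ v ∉ L)) :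
    ∀ {a b : V} (W : G.Walk a b),
      ((a ∈ L ↔ b ∈ L) ∧ Even W.length) ∨ ((a ∈ L ↔ b ∉ L) ∧ ¬Even W.length) := by
  intro a b W
  induction W with
  | nil => left; simp
  | @cons a c b h W ih =>
    have hac := hL a c h
    rcases ih with ⟨hiff, hev⟩ | ⟨hiff, hev⟩
    · right
      constructor
      · tauto
      · simpa [Walk.length_cons, Nat.even_add_one] using hev
    · left
      constructor
      · tauto
      · simpa [Walk.length_cons, Nat.even_add_one] using hev

/-- The restriction of a graph to a finite vertex set. -/
def restrict (G : SimpleGraph V) (s : Finset V) : SimpleGraph V where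
  Adj a b := G.Adj a b ∧ a ∈ s ∧ b ∈ s
  symm := ⟨fun a b ⟨h, ha, hb⟩ => ⟨h.symm, hb, ha⟩⟩
  loopless := ⟨fun a ⟨h, _, _⟩ => G.irrefl h⟩

lemma restrict_le (G : SimpleGraph V) (s : Finset V) : restrict G s ≤ G := fun _ _ h => h.1

instance restrictDecidable (G : SimpleGraph V) [DecidableRel G.Adj] (s : Finset V) :
    DecidableRel (restrict G s).Adj := fun a b => by
  unfold restrict; simp only; infer_instance


end Lemmas

section Finite

variable {V : Type} [DecidableEq V] [Fintype V]

/-- Cleaning lemma: pass to a subgraph with large minimum degrees. -/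
lemma cleaning [Fintype V] (G : SimpleGraph V) [DecidableRel G.Adj]
    (L : Set V) [DecidablePred (· ∈ L)] (p q : ℕ)
    (hbig : (univ.filter (· ∈ L)).card * (2 * p + 1) +
        (univ.filter (· ∉ L)).card * (2 * q + 1) < 2 * G.edgeFinset.card) :
    ∃ s : Finset V, (∃ v ∈ s, ∃ w ∈ s, G.Adj v w) ∧
      ∀ v ∈ s, (if v ∈ L then p + 1 else q + 1) ≤ (s.filter (G.Adj v)).card := by
  classical
  set d : Finset V → V → ℕ := fun s v => (s.filter (G.Adj v)).card with hd
  set c : V → ℤ := fun v => if v ∈ L then 2 * p + 1 else 2 * q + 1 with hc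
  set f : Finset V → ℤ := fun s => (∑ v ∈ s, (d s v : ℤ)) - ∑ v ∈ s, c v with hf
  -- the key exchange identity
  have hiden : ∀ (s : Finset V) (v : V), v ∈ s →
      (∑ u ∈ s, (d s u : ℤ)) = (∑ u ∈ s.erase v, (d (s.erase v) u : ℤ)) + 2 * d s v := by
    intro s v hv
    have h1 : (∑ u ∈ s, (d s u : ℤ)) = (d s v : ℤ) + ∑ u ∈ s.erase v, (d s u : ℤ) := by
      exact (Finset.add_sum_erase s (fun u => (d s u : ℤ)) hv).symm
    have h2 : ∀ u ∈ s.erase v, (d s u : ℤ) = (d (s.erase v) u : ℤ) + (if G.Adj u v then 1 else 0) := by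
      intro u hu
      have hune : u ≠ v := Finset.ne_of_mem_erase hu
      have : s.filter (G.Adj u) = insert v ((s.erase v).filter (G.Adj u)) ∨
          s.filter (G.Adj u) = (s.erase v).filter (G.Adj u) := by
        by_cases hadj : G.Adj u v
        · left
          rw [Finset.filter_erase]
          rw [Finset.insert_erase]
          exact Finset.mem_filter.mpr ⟨hv, hadj⟩
        · right
          rw [Finset.filter_erase]
          rw [Finset.erase_eq_of_notMem]
          intro hmem
          exact hadj (Finset.mem_filter.mp hmem).2
      by_cases hadj : G.Adj u v
      · rcases this with h | h
        · simp only [hd, hadj, if_true]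
          rw [h, Finset.card_insert_of_notMem]
          · push_cast; ring
          · intro hmem
            exact (Finset.notMem_erase v s) (Finset.mem_of_mem_filter _ hmem)
        · exfalso
          have hvmem : v ∈ s.filter (G.Adj u) := Finset.mem_filter.mpr ⟨hv, hadj⟩
          rw [h] at hvmem
          exact (Finset.notMem_erase v s) (Finset.mem_of_mem_filter _ hvmem)
      · rcases this with h | h
        · exfalso
          have : v ∈ s.filter (G.Adj u) := by rw [h]; exact Finset.mem_insert_self _ _
          exact hadj (Finset.mem_filter.mp this).2
        · simp only [hd, hadj, if_false, h, add_zero]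
    have h3 : (∑ u ∈ s.erase v, (d s u : ℤ)) =
        (∑ u ∈ s.erase v, (d (s.erase v) u : ℤ)) + ∑ u ∈ s.erase v, (if G.Adj u v then (1:ℤ) else 0) := by
      rw [← Finset.sum_add_distrib]
      exact Finset.sum_congr rfl h2
    have h4 : (∑ u ∈ s.erase v, (if G.Adj u v then (1:ℤ) else 0)) = (d s v : ℤ) := by
      rw [Finset.sum_boole]
      simp only [hd]
      congr 2
      rw [Finset.filter_erase]
      rw [Finset.erase_eq_of_notMem]
      · apply Finset.filter_congr
        intro u _
        simp [adj_comm]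
      · intro hmem
        exact G.irrefl (Finset.mem_filter.mp hmem).2
    rw [h1, h3, h4]; ring
  -- pick the maximizer
  obtain ⟨s₀, -, hmax⟩ := Finset.exists_max_image (univ : Finset (Finset V)) f ⟨∅, Finset.mem_univ ∅⟩
  have hmax' : ∀ t : Finset V, f t ≤ f s₀ := fun t => hmax t (Finset.mem_univ t)
  -- value at univ
  have huniv : (2 * G.edgeFinset.card : ℤ) - ((univ.filter (· ∈ L)).card * (2 * p + 1) +
      (univ.filter (· ∉ L)).card * (2 * q + 1)) ≤ f s₀ := by
    refine le_trans ?_ (hmax' univ)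
    rw [hf]
    simp only
    have hdeg : ∀ v : V, d univ v = G.degree v := by
      intro v
      rw [hd]
      simp only
      rw [← SimpleGraph.card_neighborFinset_eq_degree]
      congr 1
      ext w
      simp [SimpleGraph.mem_neighborFinset]
    have h5 : (∑ v ∈ univ, (d univ v : ℤ)) = 2 * G.edgeFinset.card := by
      push_cast
      norm_cast
      rw [Finset.sum_congr rfl (fun v _ => hdeg v)]
      exact SimpleGraph.sum_degrees_eq_twice_card_edges G
    have h6 : (∑ v ∈ univ, c v) = ((univ.filter (· ∈ L)).card * (2 * p + 1) +
        (univ.filter (· ∉ L)).card * (2 * q + 1) : ℤ) := by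
      rw [hc]
      rw [Finset.sum_ite]
      simp only [Finset.sum_const, smul_eq_mul]
      push_cast
      ring
    rw [h5, h6]
  have hpos : 0 < f s₀ := by
    have : ((univ.filter (· ∈ L)).card * (2 * p + 1) +
        (univ.filter (· ∉ L)).card * (2 * q + 1) : ℤ) < 2 * G.edgeFinset.card := by
      exact_mod_cast hbig
    omega
  -- minimum degree property
  have hmindeg : ∀ v ∈ s₀, c v ≤ 2 * d s₀ v := by
    intro v hv
    have := hmax' (s₀.erase v)
    simp only [hf] at this
    rw [hiden s₀ v hv] at this
    rw [← Finset.add_sum_erase _ c hv] at this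
    omega
  refine ⟨s₀, ?_, ?_⟩
  · -- there is an edge
    have : 0 < ∑ v ∈ s₀, (d s₀ v : ℤ) := by
      have hcnn : 0 ≤ ∑ v ∈ s₀, c v := by
        apply Finset.sum_nonneg
        intro v _
        simp only [hc]
        split <;> positivity
      simp only [hf] at hpos
      omega
    have : ∃ v ∈ s₀, 0 < d s₀ v := by
      by_contra hcon
      push_neg at hcon
      have : ∑ v ∈ s₀, (d s₀ v : ℤ) = 0 := by
        apply Finset.sum_eq_zero
        intro v hv
        have := hcon v hv
        omega
      omega
    obtain ⟨v, hv, hdv⟩ := this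
    rw [hd] at hdv
    simp only [Finset.card_pos] at hdv
    obtain ⟨w, hw⟩ := hdv.exists_mem
    rw [Finset.mem_filter] at hw
    exact ⟨v, hv, w, hw.1, hw.2⟩
  · intro v hv
    have := hmindeg v hv
    simp only [hc, hd] at this
    by_cases hvL : v ∈ L
    · simp only [hvL, if_true] at this ⊢
      omega
    · simp only [hvL, if_false] at this ⊢
      omega


/-- The finset of paths of length `j` ending at `u`. -/
def pathsTo (G : SimpleGraph V) [DecidableRel G.Adj] (u : V) (j : ℕ) :
    Finset (Σ v : V, G.Walk v u) :=
  univ.sigma fun v => (G.finsetWalkLength j v u).filter Walk.IsPath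

lemma mem_pathsTo {G : SimpleGraph V} [DecidableRel G.Adj] {u : V} {j : ℕ}
    {x : Σ v : V, G.Walk v u} : x ∈ pathsTo G u j ↔ x.2.length = j ∧ x.2.IsPath := by
  cases x
  simp [pathsTo, Finset.mem_sigma, SimpleGraph.mem_finsetWalkLength_iff, Finset.mem_filter]

/-- Remove the first edge of a walk. -/
def chop (G : SimpleGraph V) (u : V) : (Σ v : V, G.Walk v u) → Σ v : V, G.Walk v u
  | ⟨_, Walk.nil⟩ => ⟨u, Walk.nil⟩
  | ⟨_, Walk.cons _ Q⟩ => ⟨_, Q⟩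

section Counting

variable (G : SimpleGraph V) [DecidableRel G.Adj]

lemma step_count (k : ℕ) (hk : 1 ≤ k)
    (hg : ∀ (a : V) (W : G.Walk a a), W.IsCycle → 2 * k < W.length)
    (u0 : V) (j c : ℕ) (hjk : j + 1 ≤ k)
    (hdeg' : ∀ x ∈ pathsTo G u0 j, c + 1 ≤ G.degree x.1) :
    c * (pathsTo G u0 j).card ≤ (pathsTo G u0 (j + 1)).card := by
  classical
  have hmaps : ∀ x ∈ pathsTo G u0 (j + 1), chop G u0 x ∈ pathsTo G u0 j := by
    rintro ⟨v, P⟩ hx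
    rw [mem_pathsTo] at hx
    cases P with
    | nil => simp at hx
    | cons h Q =>
      rw [mem_pathsTo]
      refine ⟨?_, hx.2.of_cons⟩
      show Q.length = j
      have := hx.1
      rw [Walk.length_cons] at this
      omega
  rw [Finset.card_eq_sum_card_fiberwise hmaps]
  have hfiber : ∀ b ∈ pathsTo G u0 j,
      c ≤ ((pathsTo G u0 (j + 1)).filter fun x => chop G u0 x = b).card := by
    rintro ⟨v, Q⟩ hb
    rw [mem_pathsTo] at hb
    obtain ⟨hQlen, hQpath⟩ := hb
    set E : Finset V := G.neighborFinset v \ Q.support.toFinset with hE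
    have hinter : G.neighborFinset v ∩ Q.support.toFinset ⊆ {Q.getVert 1} := by
      intro w hw
      rw [Finset.mem_inter, SimpleGraph.mem_neighborFinset, List.mem_toFinset] at hw
      obtain ⟨hwadj, hwsup⟩ := hw
      rw [Finset.mem_singleton]
      set Q1 := Q.takeUntil w hwsup with hQ1
      have hP1path : (Walk.cons hwadj Walk.nil).IsPath := by
        rw [Walk.cons_isPath_iff]
        exact ⟨Walk.IsPath.nil, by simp [hwadj.ne]⟩
      by_cases heq : Q1 = Walk.cons hwadj Walk.nil
      · have hspec := Q.take_spec hwsup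
        rw [← hQ1, heq] at hspec
        rw [← hspec]
        simp [Walk.getVert_cons_succ, Walk.getVert_zero]
      · exfalso
        obtain ⟨a, W, hW, hWlen⟩ := exists_cycle_of_two_paths (Q1.length + 1) Q1
          (Walk.cons hwadj Walk.nil) (hQpath.takeUntil hwsup) hP1path heq (by simp)
        have := hg a W hW
        have hQl : Q.length = j := hQlen
        have hQ1len : Q1.length ≤ Q.length := Walk.length_takeUntil_le Q hwsup
        simp only [Walk.length_cons, Walk.length_nil] at hWlen
        omega
    have hEcard : c ≤ E.card := by
      have h1 : (G.neighborFinset v ∩ Q.support.toFinset).card ≤ 1 := by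
        calc (G.neighborFinset v ∩ Q.support.toFinset).card ≤ ({Q.getVert 1} : Finset V).card :=
          Finset.card_le_card hinter
        _ = 1 := Finset.card_singleton _
      have h2 : E.card = (G.neighborFinset v).card -
          (G.neighborFinset v ∩ Q.support.toFinset).card := by
        rw [hE, ← Finset.sdiff_inter_self_left, Finset.card_sdiff_of_subset Finset.inter_subset_left]
      have h3 : c + 1 ≤ G.degree v := hdeg' ⟨v, Q⟩ (mem_pathsTo.mpr ⟨hQlen, hQpath⟩)
      rw [← SimpleGraph.card_neighborFinset_eq_degree] at h3
      omega
    -- now inject E into the fiber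
    have hinj : c ≤ ((pathsTo G u0 (j + 1)).filter fun x => chop G u0 x = ⟨v, Q⟩).card := by
      refine le_trans hEcard (Finset.card_le_card_of_injOn
        (fun w => if hw : G.Adj v w then ⟨w, Walk.cons hw.symm Q⟩ else ⟨v, Q⟩) ?_ ?_)
      · intro w hw
        simp only [Finset.mem_coe, hE, Finset.mem_sdiff, SimpleGraph.mem_neighborFinset, List.mem_toFinset] at hw
        obtain ⟨hwadj, hwsup⟩ := hw
        simp only [dif_pos hwadj]
        rw [Finset.mem_coe, Finset.mem_filter]
        constructor
        · rw [mem_pathsTo]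
          constructor
          · simp [Walk.length_cons, hQlen]
          · rw [Walk.cons_isPath_iff]
            exact ⟨hQpath, hwsup⟩
        · rfl
      · intro w hw w' hw' heq
        simp only [Finset.mem_coe, hE, Finset.mem_sdiff, SimpleGraph.mem_neighborFinset] at hw hw'
        simp only [dif_pos hw.1, dif_pos hw'.1] at heq
        exact congrArg Sigma.fst heq
    exact hinj
  calc c * (pathsTo G u0 j).card = ∑ _b ∈ pathsTo G u0 j, c := by
        rw [Finset.sum_const, smul_eq_mul, mul_comm]
  _ ≤ ∑ b ∈ pathsTo G u0 j, ((pathsTo G u0 (j + 1)).filter fun x => chop G u0 x = b).card :=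
        Finset.sum_le_sum hfiber
end Counting

section Counting2

variable (G : SimpleGraph V) [DecidableRel G.Adj]

lemma counting (L : Set V) [DecidablePred (· ∈ L)]
    (hL : ∀ u v : V, G.Adj u v → (u ∈ L ↔ v ∉ L))
    (k : ℕ) (hk : 1 ≤ k)
    (hg : ∀ (a : V) (W : G.Walk a a), W.IsCycle → 2 * k < W.length)
    (s : Finset V) (hclosed : ∀ v w : V, G.Adj v w → v ∈ s ∧ w ∈ s)
    (p q : ℕ)
    (hdeg : ∀ v ∈ s, (if v ∈ L then p + 1 else q + 1) ≤ G.degree v)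
    (u0 w0 : V) (hadj : G.Adj u0 w0) (hu0 : u0 ∈ L) :
    (p * q) ^ k ≤ (univ.filter (· ∈ L)).card * (univ.filter (· ∉ L)).card := by
  classical
  have hw0 : w0 ∉ L := (hL u0 w0 hadj).mp hu0
  have hu0s : u0 ∈ s := (hclosed u0 w0 hadj).1
  have hw0s : w0 ∈ s := (hclosed u0 w0 hadj).2
  -- starting vertices of paths are in s
  have hstart : ∀ {v u : V} (Q : G.Walk v u), u ∈ s → v ∈ s := by
    intro v u Q hu
    cases Q with
    | nil => exact hu
    | cons h _ => exact (hclosed _ _ h).1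
  -- parity of starting vertices
  have hparity : ∀ {u : V} (j : ℕ), u ∈ L → ∀ x ∈ pathsTo G u j,
      (x.1 ∈ L ↔ Even j) := by
    rintro u j hu ⟨v, Q⟩ hx
    rw [mem_pathsTo] at hx
    have hQl : Q.length = j := hx.1
    rcases walk_parity hL Q with ⟨hiff, hev⟩ | ⟨hiff, hev⟩
    · rw [hQl] at hev; simp [hev, hiff, hu]
    · rw [hQl] at hev; simp [hev, hiff, hu]
  have hparity' : ∀ {u : V} (j : ℕ), u ∉ L → ∀ x ∈ pathsTo G u j,
      (x.1 ∈ L ↔ ¬ Even j) := by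
    rintro u j hu ⟨v, Q⟩ hx
    rw [mem_pathsTo] at hx
    have hQl : Q.length = j := hx.1
    rcases walk_parity hL Q with ⟨hiff, hev⟩ | ⟨hiff, hev⟩
    · rw [hQl] at hev; simp [hev, hiff, hu]
    · rw [hQl] at hev; simp [hev, hiff, hu]
  -- the two factor sequences
  set cL : ℕ → ℕ := fun j => if Even j then p else q with hcL
  set cR : ℕ → ℕ := fun j => if Even j then q else p with hcR
  have hcLR : ∀ j, cL j * cR j = p * q := by
    intro j; rw [hcL, hcR]; by_cases h : Even j <;> simp [h, mul_comm]
  -- degree bounds needed by step_count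
  have hdegL : ∀ j, ∀ x ∈ pathsTo G u0 j, cL j + 1 ≤ G.degree x.1 := by
    rintro j ⟨v, Q⟩ hx
    have hvs : v ∈ s := by
      have : Q.length = j ∧ Q.IsPath := mem_pathsTo.mp hx
      exact hstart Q hu0s
    have hpar := hparity j hu0 ⟨v, Q⟩ hx
    have := hdeg v hvs
    by_cases hev : Even j
    · have hvL : v ∈ L := hpar.mpr hev
      rw [if_pos hvL] at this
      rw [hcL]; simp only [hev, if_true]; exact this
    · have hvL : v ∉ L := fun h => hev (hpar.mp h)
      rw [if_neg hvL] at this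
      rw [hcL]; simp only [hev, if_false]; exact this
  have hdegR : ∀ j, ∀ x ∈ pathsTo G w0 j, cR j + 1 ≤ G.degree x.1 := by
    rintro j ⟨v, Q⟩ hx
    have hvs : v ∈ s := hstart Q hw0s
    have hpar := hparity' j hw0 ⟨v, Q⟩ hx
    have := hdeg v hvs
    by_cases hev : Even j
    · have hvL : v ∉ L := fun h => (hpar.mp h) hev
      rw [if_neg hvL] at this
      rw [hcR]; simp only [hev, if_true]; exact this
    · have hvL : v ∈ L := hpar.mpr hev
      rw [if_pos hvL] at this
      rw [hcR]; simp only [hev, if_false]; exact this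
  -- growth by induction
  have hgrow : ∀ j, j ≤ k → (p * q) ^ j ≤ (pathsTo G u0 j).card * (pathsTo G w0 j).card := by
    intro j
    induction j with
    | zero =>
      intro _
      have h1 : (⟨u0, Walk.nil⟩ : Σ v : V, G.Walk v u0) ∈ pathsTo G u0 0 := by
        rw [mem_pathsTo]; exact ⟨rfl, Walk.IsPath.nil⟩
      have h2 : (⟨w0, Walk.nil⟩ : Σ v : V, G.Walk v w0) ∈ pathsTo G w0 0 := by
        rw [mem_pathsTo]; exact ⟨rfl, Walk.IsPath.nil⟩
      have hp1 := Finset.card_pos.mpr ⟨_, h1⟩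
      have hp2 := Finset.card_pos.mpr ⟨_, h2⟩
      rw [pow_zero]
      exact Nat.mul_pos hp1 hp2
    | succ j ih =>
      intro hjk
      have hj := ih (by omega)
      have h1 := step_count G k hk hg u0 j (cL j) (by omega) (hdegL j)
      have h2 := step_count G k hk hg w0 j (cR j) (by omega) (hdegR j)
      calc (p * q) ^ (j + 1) = (p * q) ^ j * (cL j * cR j) := by rw [hcLR j, pow_succ]
      _ ≤ ((pathsTo G u0 j).card * (pathsTo G w0 j).card) * (cL j * cR j) :=
          Nat.mul_le_mul_right _ hj
      _ = (cL j * (pathsTo G u0 j).card) * (cR j * (pathsTo G w0 j).card) := by ring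
      _ ≤ (pathsTo G u0 (j + 1)).card * (pathsTo G w0 (j + 1)).card :=
          Nat.mul_le_mul h1 h2
  -- upper bound : injectivity of the starting vertex
  have hfstinj : ∀ u : V, Set.InjOn (fun x : Σ v : V, G.Walk v u => x.1) (pathsTo G u k) := by
    intro u
    rintro ⟨v, P⟩ hP ⟨v', P'⟩ hP' hvv'
    simp only at hvv'
    subst hvv'
    rw [Finset.mem_coe, mem_pathsTo] at hP hP'
    by_cases hPP : P = P'
    · rw [hPP]
    · exfalso
      obtain ⟨a, W, hW, hWlen⟩ := exists_cycle_of_two_paths (P.length + P'.length) P P'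
        hP.2 hP'.2 hPP le_rfl
      have := hg a W hW
      have h1 : P.length = k := hP.1
      have h2 : P'.length = k := hP'.1
      omega
  have hupper : ∀ (u : V) (T : Finset V), (∀ x ∈ pathsTo G u k, x.1 ∈ T) →
      (pathsTo G u k).card ≤ T.card := by
    intro u T hT
    exact Finset.card_le_card_of_injOn _ hT (hfstinj u)
  have hxcard := hgrow k le_rfl
  rcases Nat.even_or_odd k with hev | hodd
  · have hA : (pathsTo G u0 k).card ≤ (univ.filter (· ∈ L)).card := by
      apply hupper
      intro x hx
      rw [Finset.mem_filter]
      exact ⟨Finset.mem_univ _, (hparity k hu0 x hx).mpr hev⟩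
    have hB : (pathsTo G w0 k).card ≤ (univ.filter (· ∉ L)).card := by
      apply hupper
      intro x hx
      rw [Finset.mem_filter]
      refine ⟨Finset.mem_univ _, fun h => ?_⟩
      exact ((hparity' k hw0 x hx).mp h) hev
    exact le_trans hxcard (Nat.mul_le_mul hA hB)
  · have hnev : ¬ Even k := Nat.not_even_iff_odd.mpr hodd
    have hA : (pathsTo G u0 k).card ≤ (univ.filter (· ∉ L)).card := by
      apply hupper
      intro x hx
      rw [Finset.mem_filter]
      refine ⟨Finset.mem_univ _, fun h => ?_⟩
      exact hnev ((hparity k hu0 x hx).mp h)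
    have hB : (pathsTo G w0 k).card ≤ (univ.filter (· ∈ L)).card := by
      apply hupper
      intro x hx
      rw [Finset.mem_filter]
      exact ⟨Finset.mem_univ _, (hparity' k hw0 x hx).mpr hnev⟩
    calc (p * q) ^ k ≤ (pathsTo G u0 k).card * (pathsTo G w0 k).card := hxcard
    _ ≤ (univ.filter (· ∉ L)).card * (univ.filter (· ∈ L)).card := Nat.mul_le_mul hA hB
    _ = (univ.filter (· ∈ L)).card * (univ.filter (· ∉ L)).card := Nat.mul_comm _ _

end Counting2

end Finite

end MooreAux

open MooreAux

set_option maxHeartbeats 2000000 in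
/-- weak bipartite Moore bounds. A bipartite graph with parts of sizes
`x` and `y` and no cycle with at most `2k` edges has `O(x^{1/k}·y + x·y^{1/k})` edges. -/
theorem stmt_11 :
    ∃ C : ℝ, 0 < C ∧
      ∀ (k : ℕ), 1 ≤ k →
        ∀ (V : Type) [Fintype V] (G : SimpleGraph V) (L : Set V),
          -- `G` is bipartite with parts `L` and `Lᶜ`
          (∀ u v : V, G.Adj u v → (u ∈ L ↔ v ∉ L)) →
          -- no cycle with at most `2k` edges
          (∀ (a : V) (W : G.Walk a a), W.IsCycle → 2 * k < W.length) →
          (G.edgeSet.ncard : ℝ) ≤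
            C * ((L.ncard : ℝ) ^ (1 / (k : ℝ)) * (Lᶜ.ncard : ℝ) +
              (L.ncard : ℝ) * (Lᶜ.ncard : ℝ) ^ (1 / (k : ℝ))) := by
  refine ⟨8, by norm_num, ?_⟩
  intro k hk V _ G L hL hg
  classical
  set xF := (univ.filter (· ∈ L)).card with hxF
  set yF := (univ.filter (· ∉ L)).card with hyF
  set e := G.edgeFinset.card with heF
  have hx : (L.ncard : ℝ) = (xF : ℝ) := by
    rw [Set.ncard_eq_toFinset_card']
    norm_cast
    congr 1
    ext v; simp [hxF]
  have hy : (Lᶜ.ncard : ℝ) = (yF : ℝ) := by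
    rw [Set.ncard_eq_toFinset_card']
    norm_cast
    congr 1
    ext v; simp [hyF]
  have he : (G.edgeSet.ncard : ℝ) = (e : ℝ) := by
    have h0 : G.edgeSet.ncard = e := by
      rw [heF, SimpleGraph.edgeFinset_card, ← Nat.card_coe_set_eq, Nat.card_eq_fintype_card]
    exact_mod_cast h0
  rw [hx, hy, he]
  have hkR : (1 : ℝ) ≤ (k : ℝ) := by exact_mod_cast hk
  have hkne : (k : ℝ) ≠ 0 := by positivity
  have hinvk : 0 ≤ 1 / (k : ℝ) := by positivity
  -- degenerate cases
  by_cases hy0 : yF = 0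
  · have hall : ∀ v : V, v ∈ L := by
      intro v
      by_contra hv
      have : v ∈ univ.filter (· ∉ L) := by simp [hv]
      have := Finset.card_pos.mpr ⟨v, this⟩
      omega
    have he0 : G.edgeFinset = ∅ := by
      rw [Finset.eq_empty_iff_forall_notMem]
      intro ed hed
      induction ed with
      | h u v =>
        rw [SimpleGraph.mem_edgeFinset, SimpleGraph.mem_edgeSet] at hed
        exact ((hL u v hed).mp (hall u)) (hall v)
    have : e = 0 := by rw [heF, he0, Finset.card_empty]
    rw [this]
    push_cast
    positivity
  by_cases hx0 : xF = 0
  · have hall : ∀ v : V, v ∉ L := by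
      intro v
      intro hv
      have : v ∈ univ.filter (· ∈ L) := by simp [hv]
      have := Finset.card_pos.mpr ⟨v, this⟩
      omega
    have he0 : G.edgeFinset = ∅ := by
      rw [Finset.eq_empty_iff_forall_notMem]
      intro ed hed
      induction ed with
      | h u v =>
        rw [SimpleGraph.mem_edgeFinset, SimpleGraph.mem_edgeSet] at hed
        exact (hall u) ((hL u v hed).mpr (hall v))
    have : e = 0 := by rw [heF, he0, Finset.card_empty]
    rw [this]
    push_cast
    positivity
  have hx1 : 1 ≤ xF := Nat.one_le_iff_ne_zero.mpr hx0
  have hy1 : 1 ≤ yF := Nat.one_le_iff_ne_zero.mpr hy0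
  have hX1 : (1 : ℝ) ≤ (xF : ℝ) := by exact_mod_cast hx1
  have hY1 : (1 : ℝ) ≤ (yF : ℝ) := by exact_mod_cast hy1
  have hXp : (0 : ℝ) < (xF : ℝ) := by linarith
  have hYp : (0 : ℝ) < (yF : ℝ) := by linarith
  have hXr1 : (1 : ℝ) ≤ (xF : ℝ) ^ (1 / (k : ℝ)) := Real.one_le_rpow hX1 hinvk
  have hYr1 : (1 : ℝ) ≤ (yF : ℝ) ^ (1 / (k : ℝ)) := Real.one_le_rpow hY1 hinvk
  have hXr0 : (0 : ℝ) ≤ (xF : ℝ) ^ (1 / (k : ℝ)) := by linarith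
  have hYr0 : (0 : ℝ) ≤ (yF : ℝ) ^ (1 / (k : ℝ)) := by linarith
  -- trivial cases
  by_cases htriv1 : e ≤ 8 * xF
  · have : (e : ℝ) ≤ 8 * (xF : ℝ) := by exact_mod_cast htriv1
    nlinarith [mul_le_mul_of_nonneg_left hYr1 (le_of_lt hXp),
      mul_nonneg hXr0 (le_of_lt hYp)]
  by_cases htriv2 : e ≤ 8 * yF
  · have : (e : ℝ) ≤ 8 * (yF : ℝ) := by exact_mod_cast htriv2
    nlinarith [mul_le_mul_of_nonneg_left hXr1 (le_of_lt hYp),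
      mul_nonneg (le_of_lt hXp) hYr0]
  by_cases htriv3 : e ≤ xF + yF
  · have : (e : ℝ) ≤ (xF : ℝ) + (yF : ℝ) := by exact_mod_cast htriv3
    nlinarith [mul_le_mul_of_nonneg_left hYr1 (le_of_lt hXp),
      mul_le_mul_of_nonneg_left hXr1 (le_of_lt hYp)]
  push_neg at htriv1 htriv2 htriv3
  -- main case
  set p := e / (4 * xF) with hp
  set q := e / (4 * yF) with hq
  have hpx : p * (4 * xF) ≤ e := Nat.div_mul_le_self e (4 * xF)
  have hqy : q * (4 * yF) ≤ e := Nat.div_mul_le_self e (4 * yF)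
  have hbig : xF * (2 * p + 1) + yF * (2 * q + 1) < 2 * e := by
    have h1 : 4 * (xF * p) ≤ e := by
      calc 4 * (xF * p) = p * (4 * xF) := by ring
      _ ≤ e := hpx
    have h2 : 4 * (yF * q) ≤ e := by
      calc 4 * (yF * q) = q * (4 * yF) := by ring
      _ ≤ e := hqy
    have h3 : xF * (2 * p + 1) = 2 * (xF * p) + xF := by ring
    have h4 : yF * (2 * q + 1) = 2 * (yF * q) + yF := by ring
    rw [h3, h4]
    linarith
  obtain ⟨s, ⟨v0, hv0s, w0, hw0s, hvw⟩, hmindeg⟩ := cleaning G L p q hbig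
  set G' := restrict G s with hG'
  have hle : G' ≤ G := restrict_le G s
  have hL' : ∀ u v : V, G'.Adj u v → (u ∈ L ↔ v ∉ L) := fun u v h => hL u v h.1
  have hg' : ∀ (a : V) (W : G'.Walk a a), W.IsCycle → 2 * k < W.length := by
    intro a W hW
    have h1 := hg a (W.mapLe hle) (hW.mapLe hle)
    rwa [Walk.length_map] at h1
  have hclosed : ∀ v w : V, G'.Adj v w → v ∈ s ∧ w ∈ s := fun v w h => ⟨h.2.1, h.2.2⟩
  have hdeg : ∀ v ∈ s, (if v ∈ L then p + 1 else q + 1) ≤ G'.degree v := by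
    intro v hvs
    have hnb : G'.neighborFinset v = s.filter (G.Adj v) := by
      ext w
      simp only [SimpleGraph.mem_neighborFinset, Finset.mem_filter]
      constructor
      · intro h; exact ⟨h.2.2, h.1⟩
      · intro h; exact ⟨h.2, hvs, h.1⟩
    rw [← SimpleGraph.card_neighborFinset_eq_degree, hnb]
    exact hmindeg v hvs
  -- pick the starting vertices
  have hkey : (p * q) ^ k ≤ xF * yF := by
    by_cases hv0L : v0 ∈ L
    · exact counting G' L hL' k hk hg' s hclosed p q hdeg v0 w0 ⟨hvw, hv0s, hw0s⟩ hv0L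
    · have hw0L : w0 ∈ L := by
        by_contra hw0L
        exact hv0L ((hL v0 w0 hvw).mpr hw0L)
      exact counting G' L hL' k hk hg' s hclosed p q hdeg w0 v0
        ⟨hvw.symm, hw0s, hv0s⟩ hw0L
  -- nat groundwork
  have hmodx : e % (4 * xF) < 4 * xF := Nat.mod_lt e (by omega)
  have hdmx : 4 * xF * p + e % (4 * xF) = e := by
    rw [hp]; exact Nat.div_add_mod e (4 * xF)
  have hp2 : 2 ≤ p := by
    rw [hp, Nat.le_div_iff_mul_le (by omega : 0 < 4 * xF)]
    omega
  have hmody : e % (4 * yF) < 4 * yF := Nat.mod_lt e (by omega)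
  have hdmy : 4 * yF * q + e % (4 * yF) = e := by
    rw [hq]; exact Nat.div_add_mod e (4 * yF)
  have hq2 : 2 ≤ q := by
    rw [hq, Nat.le_div_iff_mul_le (by omega : 0 < 4 * yF)]
    omega
  obtain ⟨mx, hmx1, hmx2⟩ : ∃ m, m < 4 * xF ∧ 4 * xF * p + m = e := ⟨_, hmodx, hdmx⟩
  obtain ⟨my, hmy1, hmy2⟩ : ∃ m, m < 4 * yF ∧ 4 * yF * q + m = e := ⟨_, hmody, hdmy⟩
  clear_value xF yF e p q
  clear hxF hyF heF hp hq hpx hqy hbig hmindeg hdeg hmodx hdmx hmody hdmy hL' hg' hclosed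
  -- final real arithmetic
  have hE0 : (0 : ℝ) ≤ (e : ℝ) := by positivity
  have hEX : 8 * (xF : ℝ) < (e : ℝ) := by exact_mod_cast htriv1
  have hEY : 8 * (yF : ℝ) < (e : ℝ) := by exact_mod_cast htriv2
  have hpR : (e : ℝ) / (8 * (xF : ℝ)) ≤ (p : ℝ) := by
    rw [div_le_iff₀ (by positivity)]
    have hdmR : 4 * (xF : ℝ) * (p : ℝ) + (mx : ℝ) = (e : ℝ) := by exact_mod_cast hmx2
    have hmodR : (mx : ℝ) < 4 * (xF : ℝ) := by exact_mod_cast hmx1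
    have hp2R : (2 : ℝ) ≤ (p : ℝ) := by exact_mod_cast hp2
    nlinarith
  have hqR : (e : ℝ) / (8 * (yF : ℝ)) ≤ (q : ℝ) := by
    rw [div_le_iff₀ (by positivity)]
    have hdmR : 4 * (yF : ℝ) * (q : ℝ) + (my : ℝ) = (e : ℝ) := by exact_mod_cast hmy2
    have hmodR : (my : ℝ) < 4 * (yF : ℝ) := by exact_mod_cast hmy1
    have hq2R : (2 : ℝ) ≤ (q : ℝ) := by exact_mod_cast hq2
    nlinarith
  have hkeyR : ((p : ℝ) * (q : ℝ)) ^ k ≤ (xF : ℝ) * (yF : ℝ) := by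
    have h2 : (((p * q) ^ k : ℕ) : ℝ) ≤ ((xF * yF : ℕ) : ℝ) := by exact_mod_cast hkey
    push_cast at h2
    exact h2
  set A := (e : ℝ) / (8 * (xF : ℝ)) * ((e : ℝ) / (8 * (yF : ℝ))) with hA
  have hA0 : 0 ≤ A := by positivity
  have hApq : A ≤ (p : ℝ) * (q : ℝ) := mul_le_mul hpR hqR (by positivity) (by positivity)
  have hAk : A ^ k ≤ (xF : ℝ) * (yF : ℝ) := le_trans (pow_le_pow_left₀ hA0 hApq k) hkeyR
  have hroot : A ≤ ((xF : ℝ) * (yF : ℝ)) ^ (1 / (k : ℝ)) := by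
    have h1 : (A ^ k : ℝ) ^ ((1 : ℝ) / k) ≤ ((xF : ℝ) * (yF : ℝ)) ^ ((1 : ℝ) / k) :=
      Real.rpow_le_rpow (by positivity) hAk hinvk
    rwa [← Real.rpow_natCast A k, ← Real.rpow_mul hA0, mul_one_div, div_self hkne,
      Real.rpow_one] at h1
  have hsplit : ((xF : ℝ) * (yF : ℝ)) ^ ((1 : ℝ) / k) =
      (xF : ℝ) ^ ((1:ℝ)/k) * (yF : ℝ) ^ ((1:ℝ)/k) :=
    Real.mul_rpow (le_of_lt hXp) (le_of_lt hYp)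
  have hEsq : (e : ℝ) ^ 2 ≤
      64 * ((xF : ℝ) ^ ((1:ℝ)/k) * (yF : ℝ)) * ((xF : ℝ) * (yF : ℝ) ^ ((1:ℝ)/k)) := by
    have h1 : A * (64 * (xF : ℝ) * (yF : ℝ)) = (e : ℝ) ^ 2 := by
      rw [hA]; field_simp; ring
    have h2 : ((xF : ℝ) * (yF : ℝ)) ^ ((1:ℝ)/k) * (64 * (xF : ℝ) * (yF : ℝ)) =
        64 * ((xF : ℝ) ^ ((1:ℝ)/k) * (yF : ℝ)) * ((xF : ℝ) * (yF : ℝ) ^ ((1:ℝ)/k)) := by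
      rw [hsplit]; ring
    have h3 := mul_le_mul_of_nonneg_right hroot
      (by positivity : (0:ℝ) ≤ 64 * (xF : ℝ) * (yF : ℝ))
    linarith
  set a := (xF : ℝ) ^ ((1:ℝ)/k) * (yF : ℝ) with ha
  set b := (xF : ℝ) * (yF : ℝ) ^ ((1:ℝ)/k) with hb
  have ha0 : 0 ≤ a := by positivity
  have hb0 : 0 ≤ b := by positivity
  nlinarith [sq_nonneg (a - b), sq_nonneg (a + b), hEsq, hE0, ha0, hb0]
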